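/- Let a be a real number. For s ∈ (2,∞) define t(s) = (s+1)²(s−2) / ((s−1)²(s+2)) and τ̃(s) = (s−2)^{4a²}·(s−1)^{2a²−7/72}·(s+1)^{−10a²+1/8}·(s+2)^{10a²−1/9} (real powers of positive real bases). Define σ̃(s) = t(s)(t(s)−1)·(τ̃'(s)/τ̃(s))/t'(s). Then for every s ∈ (2,∞) at which t'(s) ≠ 0, writing u = t(s), σ = σ̃(s), σ' = σ̃'(s)/t'(s), and σ'' = (d/ds)(σ̃'(s)/t'(s)) / t'(s), one has (u(u−1)σ'')² = −2·det of the 3×3 matrix with rows (2θ_0², uσ'−σ, σ'+θ_0²+θ_t²+θ_1²−θ_∞²), (uσ'−σ, 2θ_t², (u−1)σ'−σ), (σ'+θ_0²+θ_t²+θ_1²−θ_∞², (u−1)σ'−σ, 2θ_1²), with (θ_0,θ_t,θ_1,θ_∞) = (2a, a, a, 1/3); i.e. the algebraic tau function τ̃(s) solves the σ-form of Painlevé VI along the parametrization t = t(s). -/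

import Mathlib

open Set

private lemma hasDerivAt_cubic (c3 c2 c1 c0 x : ℝ) :
    HasDerivAt (fun y : ℝ => c3 * y ^ 3 + c2 * y ^ 2 + c1 * y + c0)
      (3 * c3 * x ^ 2 + 2 * c2 * x + c1) x := by
  have h3 := (hasDerivAt_pow 3 x).const_mul c3
  have h2 := (hasDerivAt_pow 2 x).const_mul c2
  have h1 := (hasDerivAt_id x).const_mul c1
  have := ((h3.add h2).add h1).add_const c0
  exact this.congr_deriv (by push_cast; ring)

private lemma hasDerivAt_logshift {x c : ℝ} (h : x + c ≠ 0) :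
    HasDerivAt (fun y : ℝ => Real.log (y + c)) (x + c)⁻¹ x := by
  exact ((Real.hasDerivAt_log h).comp x ((hasDerivAt_id x).add_const c)).congr_deriv (mul_one _)

private lemma hasDerivAt_logshift' {x c : ℝ} (h : x - c ≠ 0) :
    HasDerivAt (fun y : ℝ => Real.log (y - c)) (x - c)⁻¹ x := by
  exact ((Real.hasDerivAt_log h).comp x ((hasDerivAt_id x).sub_const c)).congr_deriv (mul_one _)

set_option maxHeartbeats 1000000 in
private lemma final_alg (a s : ℝ) (h2 : s - 1 ≠ 0) (h3 : s + 1 ≠ 0) (h4 : s + 2 ≠ 0) :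
      (fun (u σv σ' σ'' : ℝ) =>
        (u * (u - 1) * σ'') ^ 2 =
          -2 * Matrix.det
            !![2 * (2 * a) ^ 2, u * σ' - σv,
                σ' + (2 * a) ^ 2 + a ^ 2 + a ^ 2 - (1 / 3 : ℝ) ^ 2;
              u * σ' - σv, 2 * a ^ 2, (u - 1) * σ' - σv;
              σ' + (2 * a) ^ 2 + a ^ 2 + a ^ 2 - (1 / 3 : ℝ) ^ 2,
                (u - 1) * σ' - σv, 2 * a ^ 2])
      ((s + 1) ^ 2 * (s - 2) / ((s - 1) ^ 2 * (s + 2)))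
      ((-2 * a ^ 2 * s ^ 3 + s ^ 3 / 36 - 6 * a ^ 2 * s + 12 * a ^ 2 - 2 / 9) / ((s - 1) ^ 2 * (s + 2)))
      ((2 * a ^ 2 * s ^ 2 - s ^ 2 / 72 - 2 * a ^ 2 * s + s / 18 - 2 * a ^ 2 + 1 / 18) / (s + 1))
      (((2 * a ^ 2 * s ^ 2 - s ^ 2 / 72 + 4 * a ^ 2 * s - s / 36) / (s + 1) ^ 2) /
        ((12 * s + 12) / ((s - 1) ^ 3 * (s + 2) ^ 2))) := by
  have h12 : (12:ℝ) * s + 12 ≠ 0 := by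
    intro h; apply h3; linarith
  have hx : ((s + 1) ^ 2 * (s - 2) / ((s - 1) ^ 2 * (s + 2))) *
      ((2 * a ^ 2 * s ^ 2 - s ^ 2 / 72 - 2 * a ^ 2 * s + s / 18 - 2 * a ^ 2 + 1 / 18) / (s + 1)) -
      ((-2 * a ^ 2 * s ^ 3 + s ^ 3 / 36 - 6 * a ^ 2 * s + 12 * a ^ 2 - 2 / 9) / ((s - 1) ^ 2 * (s + 2))) =
      (2 * a ^ 2 * s ^ 2 - s ^ 2 / 72 - 4 * a ^ 2 * s + s / 18 + 4 * a ^ 2 - 1 / 18) / (s - 1) := by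
    field_simp
    ring
  have hy : ((s + 1) ^ 2 * (s - 2) / ((s - 1) ^ 2 * (s + 2)) - 1) *
      ((2 * a ^ 2 * s ^ 2 - s ^ 2 / 72 - 2 * a ^ 2 * s + s / 18 - 2 * a ^ 2 + 1 / 18) / (s + 1)) -
      ((-2 * a ^ 2 * s ^ 3 + s ^ 3 / 36 - 6 * a ^ 2 * s + 12 * a ^ 2 - 2 / 9) / ((s - 1) ^ 2 * (s + 2))) =
      (2 * a ^ 2 * s ^ 2 - s ^ 2 / 36 + 2 * a ^ 2) / ((s - 1) * (s + 1)) := by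
    field_simp
    ring
  have hw : ((s + 1) ^ 2 * (s - 2) / ((s - 1) ^ 2 * (s + 2))) *
      ((s + 1) ^ 2 * (s - 2) / ((s - 1) ^ 2 * (s + 2)) - 1) *
      (((2 * a ^ 2 * s ^ 2 - s ^ 2 / 72 + 4 * a ^ 2 * s - s / 36) / (s + 1) ^ 2) /
        ((12 * s + 12) / ((s - 1) ^ 3 * (s + 2) ^ 2))) =
      (-2 / 3 * a ^ 2 * s ^ 3 + s ^ 3 / 216 + 8 / 3 * a ^ 2 * s - s / 54) / ((s - 1) * (s + 1)) := by
    field_simp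
    ring
  simp only [Matrix.det_fin_three, Matrix.cons_val', Matrix.cons_val_zero, Matrix.cons_val_one,
    Matrix.head_cons, Matrix.empty_val', Matrix.cons_val_fin_one, Matrix.head_fin_const,
    Matrix.of_apply, Matrix.cons_val_two, Matrix.tail_cons]
  rw [hw, hx, hy]
  field_simp
  ring

set_option maxHeartbeats 1000000 in
/-- the algebraic Painlevé VI solution III with parameters
`θ = (2a, a, a, 1/3)`: along the parametrization `t(s) = (s+1)²(s−2)/((s−1)²(s+2))`,
`s ∈ (2,∞)`, the tau function `τ̃(s) = (s−2)^{4a²}(s−1)^{2a²−7/72}(s+1)^{−10a²+1/8}(s+2)^{10a²−1/9}`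
solves the σ-form of Painlevé VI, with derivatives in `t` computed by the chain rule
(division by `t'(s)`) at points where `t'(s) ≠ 0`. -/
theorem algebraic_solution_III_sigma_form (a : ℝ)
    (tf τ : ℝ → ℝ)
    (htf : ∀ s ∈ Ioi (2 : ℝ), tf s = (s + 1) ^ 2 * (s - 2) / ((s - 1) ^ 2 * (s + 2)))
    (hτ : ∀ s ∈ Ioi (2 : ℝ),
      τ s = (s - 2) ^ (4 * a ^ 2) * (s - 1) ^ (2 * a ^ 2 - 7 / 72) *
        (s + 1) ^ (-10 * a ^ 2 + 1 / 8) * (s + 2) ^ (10 * a ^ 2 - 1 / 9))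
    (σ : ℝ → ℝ)
    (hσ : ∀ s : ℝ, σ s = tf s * (tf s - 1) * (deriv τ s / τ s) / deriv tf s) :
    ∀ s ∈ Ioi (2 : ℝ), deriv tf s ≠ 0 →
      (fun (u σv σ' σ'' : ℝ) =>
        (u * (u - 1) * σ'') ^ 2 =
          -2 * Matrix.det
            !![2 * (2 * a) ^ 2, u * σ' - σv,
                σ' + (2 * a) ^ 2 + a ^ 2 + a ^ 2 - (1 / 3 : ℝ) ^ 2;
              u * σ' - σv, 2 * a ^ 2, (u - 1) * σ' - σv;
              σ' + (2 * a) ^ 2 + a ^ 2 + a ^ 2 - (1 / 3 : ℝ) ^ 2,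
                (u - 1) * σ' - σv, 2 * a ^ 2])
      (tf s) (σ s) (deriv σ s / deriv tf s)
      (deriv (fun x => deriv σ x / deriv tf x) s / deriv tf s) := by
  set g : ℝ → ℝ := fun y =>
    Real.log (y - 2) * (4 * a ^ 2) + Real.log (y - 1) * (2 * a ^ 2 - 7 / 72) +
    Real.log (y + 1) * (-10 * a ^ 2 + 1 / 8) + Real.log (y + 2) * (10 * a ^ 2 - 1 / 9) with hg
  -- derivative of tf on Ioi 2
  have key_tf : ∀ x ∈ Ioi (2 : ℝ), HasDerivAt tf ((12 * x + 12) / ((x - 1) ^ 3 * (x + 2) ^ 2)) x := by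
    intro x hx
    have hx2 : (2 : ℝ) < x := hx
    have hm1 : x - 1 ≠ 0 := by nlinarith
    have hp2 : x + 2 ≠ 0 := by nlinarith
    have hden : (x - 1) ^ 2 * (x + 2) ≠ 0 := mul_ne_zero (pow_ne_zero _ hm1) hp2
    have hn : HasDerivAt (fun y : ℝ => (y + 1) ^ 2 * (y - 2)) (3 * x ^ 2 - 3) x := by
      have := hasDerivAt_cubic 1 0 (-3) (-2) x
      have heq : (fun y : ℝ => (y + 1) ^ 2 * (y - 2)) =
          fun y : ℝ => 1 * y ^ 3 + 0 * y ^ 2 + (-3) * y + (-2) := by funext y; ring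
      rw [heq]; convert this using 1; ring
    have hd : HasDerivAt (fun y : ℝ => (y - 1) ^ 2 * (y + 2)) (3 * x ^ 2 - 3) x := by
      have := hasDerivAt_cubic 1 0 (-3) 2 x
      have heq : (fun y : ℝ => (y - 1) ^ 2 * (y + 2)) =
          fun y : ℝ => 1 * y ^ 3 + 0 * y ^ 2 + (-3) * y + 2 := by funext y; ring
      rw [heq]; convert this using 1; ring
    have hdiv := hn.div hd hden
    have hev : tf =ᶠ[nhds x] fun y => (y + 1) ^ 2 * (y - 2) / ((y - 1) ^ 2 * (y + 2)) :=
      Filter.eventuallyEq_of_mem (isOpen_Ioi.mem_nhds hx) (fun y hy => htf y hy)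
    have := hdiv.congr_of_eventuallyEq hev
    refine this.congr_deriv ?_
    field_simp
    ring
  -- τ equals exp ∘ g on Ioi 2
  have hτexp : ∀ x ∈ Ioi (2 : ℝ), τ x = Real.exp (g x) := by
    intro x hx
    have hx2 : (2 : ℝ) < x := hx
    have h1 : (0:ℝ) < x - 2 := by linarith
    have h2 : (0:ℝ) < x - 1 := by linarith
    have h3 : (0:ℝ) < x + 1 := by linarith
    have h4 : (0:ℝ) < x + 2 := by linarith
    rw [hτ x hx, Real.rpow_def_of_pos h1, Real.rpow_def_of_pos h2, Real.rpow_def_of_pos h3,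
      Real.rpow_def_of_pos h4, ← Real.exp_add, ← Real.exp_add, ← Real.exp_add, hg]
  -- logarithmic derivative of τ on Ioi 2
  have key_L : ∀ x ∈ Ioi (2 : ℝ), deriv τ x / τ x =
      4 * a ^ 2 / (x - 2) + (2 * a ^ 2 - 7 / 72) / (x - 1) +
      (-10 * a ^ 2 + 1 / 8) / (x + 1) + (10 * a ^ 2 - 1 / 9) / (x + 2) := by
    intro x hx
    have hx2 : (2 : ℝ) < x := hx
    have h1 : x - 2 ≠ 0 := by nlinarith
    have h2 : x - 1 ≠ 0 := by nlinarith
    have h3 : x + 1 ≠ 0 := by nlinarith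
    have h4 : x + 2 ≠ 0 := by nlinarith
    have hgd : HasDerivAt g
        ((x - 2)⁻¹ * (4 * a ^ 2) + (x - 1)⁻¹ * (2 * a ^ 2 - 7 / 72) +
         (x + 1)⁻¹ * (-10 * a ^ 2 + 1 / 8) + (x + 2)⁻¹ * (10 * a ^ 2 - 1 / 9)) x := by
      have l1 := (hasDerivAt_logshift' h1).mul_const (4 * a ^ 2)
      have l2 := (hasDerivAt_logshift' h2).mul_const (2 * a ^ 2 - 7 / 72)
      have l3 := (hasDerivAt_logshift h3).mul_const (-10 * a ^ 2 + 1 / 8)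
      have l4 := (hasDerivAt_logshift h4).mul_const (10 * a ^ 2 - 1 / 9)
      exact ((l1.add l2).add l3).add l4
    have hev : τ =ᶠ[nhds x] fun y => Real.exp (g y) :=
      Filter.eventuallyEq_of_mem (isOpen_Ioi.mem_nhds hx) (fun y hy => hτexp y hy)
    have hτd : HasDerivAt τ (Real.exp (g x) *
        ((x - 2)⁻¹ * (4 * a ^ 2) + (x - 1)⁻¹ * (2 * a ^ 2 - 7 / 72) +
         (x + 1)⁻¹ * (-10 * a ^ 2 + 1 / 8) + (x + 2)⁻¹ * (10 * a ^ 2 - 1 / 9))) x :=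
      hgd.exp.congr_of_eventuallyEq hev
    rw [hτd.deriv, hτexp x hx, mul_comm (Real.exp (g x)), mul_div_assoc,
      div_self (Real.exp_ne_zero _), mul_one]
    field_simp
  -- σ equals explicit rational function on Ioi 2
  have key_σ : ∀ x ∈ Ioi (2 : ℝ), σ x =
      (-2 * a ^ 2 * x ^ 3 + x ^ 3 / 36 - 6 * a ^ 2 * x + 12 * a ^ 2 - 2 / 9) /
        ((x - 1) ^ 2 * (x + 2)) := by
    intro x hx
    have hx2 : (2 : ℝ) < x := hx
    have h1 : x - 2 ≠ 0 := by nlinarith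
    have h2 : x - 1 ≠ 0 := by nlinarith
    have h3 : x + 1 ≠ 0 := by nlinarith
    have h4 : x + 2 ≠ 0 := by nlinarith
    have h12 : (12 : ℝ) * x + 12 ≠ 0 := by nlinarith
    rw [hσ x, (key_tf x hx).deriv, key_L x hx, htf x hx]
    field_simp
    ring
  -- derivative of σ on Ioi 2
  have key_σd : ∀ x ∈ Ioi (2 : ℝ), HasDerivAt σ
      ((24 * a ^ 2 * x ^ 2 - x ^ 2 / 6 - 24 * a ^ 2 * x + 2 / 3 * x - 24 * a ^ 2 + 2 / 3) /
        ((x - 1) ^ 3 * (x + 2) ^ 2)) x := by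
    intro x hx
    have hx2 : (2 : ℝ) < x := hx
    have h2 : x - 1 ≠ 0 := by nlinarith
    have h4 : x + 2 ≠ 0 := by nlinarith
    have hden : (x - 1) ^ 2 * (x + 2) ≠ 0 := mul_ne_zero (pow_ne_zero _ h2) h4
    have hn := hasDerivAt_cubic (-2 * a ^ 2 + 1 / 36) 0 (-6 * a ^ 2) (12 * a ^ 2 - 2 / 9) x
    have hd : HasDerivAt (fun y : ℝ => (y - 1) ^ 2 * (y + 2)) (3 * x ^ 2 - 3) x := by
      have := hasDerivAt_cubic 1 0 (-3) 2 x
      have heq : (fun y : ℝ => (y - 1) ^ 2 * (y + 2)) =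
          fun y : ℝ => 1 * y ^ 3 + 0 * y ^ 2 + (-3) * y + 2 := by funext y; ring
      rw [heq]; convert this using 1; ring
    have hdiv := hn.div hd hden
    have hev : σ =ᶠ[nhds x] fun y =>
        ((-2 * a ^ 2 + 1 / 36) * y ^ 3 + 0 * y ^ 2 + (-6 * a ^ 2) * y + (12 * a ^ 2 - 2 / 9)) /
          ((y - 1) ^ 2 * (y + 2)) := by
      refine Filter.eventuallyEq_of_mem (isOpen_Ioi.mem_nhds hx) (fun y hy => ?_)
      rw [key_σ y hy]; ring_nf
    have := hdiv.congr_of_eventuallyEq hev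
    refine this.congr_deriv ?_
    field_simp
    ring
  -- σ' in t, as explicit rational function on Ioi 2
  have key_R : ∀ x ∈ Ioi (2 : ℝ), deriv σ x / deriv tf x =
      (2 * a ^ 2 * x ^ 2 - x ^ 2 / 72 - 2 * a ^ 2 * x + x / 18 - 2 * a ^ 2 + 1 / 18) / (x + 1) := by
    intro x hx
    have hx2 : (2 : ℝ) < x := hx
    have h2 : x - 1 ≠ 0 := by nlinarith
    have h3 : x + 1 ≠ 0 := by nlinarith
    have h4 : x + 2 ≠ 0 := by nlinarith
    have h12 : (12 : ℝ) * x + 12 ≠ 0 := by nlinarith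
    rw [(key_σd x hx).deriv, (key_tf x hx).deriv]
    field_simp
    ring
  intro s hs hds
  have hs2 : (2 : ℝ) < s := hs
  have h2 : s - 1 ≠ 0 := by nlinarith
  have h3 : s + 1 ≠ 0 := by nlinarith
  have h4 : s + 2 ≠ 0 := by nlinarith
  have key_R1 : HasDerivAt (fun x => deriv σ x / deriv tf x)
      ((2 * a ^ 2 * s ^ 2 - s ^ 2 / 72 + 4 * a ^ 2 * s - s / 36) / (s + 1) ^ 2) s := by
    have hn := hasDerivAt_cubic 0 (2 * a ^ 2 - 1 / 72) (-2 * a ^ 2 + 1 / 18) (-2 * a ^ 2 + 1 / 18) s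
    have hd : HasDerivAt (fun y : ℝ => y + 1) 1 s := (hasDerivAt_id s).add_const 1
    have hdiv := hn.div hd h3
    have hev : (fun x => deriv σ x / deriv tf x) =ᶠ[nhds s] fun y =>
        (0 * y ^ 3 + (2 * a ^ 2 - 1 / 72) * y ^ 2 + (-2 * a ^ 2 + 1 / 18) * y +
          (-2 * a ^ 2 + 1 / 18)) / (y + 1) := by
      refine Filter.eventuallyEq_of_mem (isOpen_Ioi.mem_nhds hs) (fun y hy => ?_)
      rw [key_R y hy]; ring_nf
    have := hdiv.congr_of_eventuallyEq hev
    refine this.congr_deriv ?_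
    field_simp
    ring
  rw [key_R s hs, key_R1.deriv, (key_tf s hs).deriv, htf s hs, key_σ s hs]
  exact final_alg a s h2 h3 h4
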